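/- There exist universal constants c, C, K₀ > 0 (independent of B and δ) such that for every K ≥ K₀, every B ≥ 1, and every δ = (δ_1,…,δ_B) with each |δ_t| ≤ 1/4 and KL(P_δ ‖ P_0) ≥ C·K, the likelihood-ratio test φ_K(y) := 1{ L(y) ≥ K/2 } satisfies P_0(φ_K = 1) + P_δ(φ_K = 0) ≤ e^{−cK}. -/

import Mathlib

open Real

/-- Probability mass of a Bernoulli(p) outcome. -/
def bernPMF (p : ℝ) : Bool → ℝ := fun b => if b then p else 1 - p

/-- Probability mass function of the product measure `P_δ` on `{0,1}^B` whose `t`-th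
coordinate is `Bernoulli(1/2 + δ t)`. -/
noncomputable def prodPMF (B : ℕ) (δ : Fin B → ℝ) (y : Fin B → Bool) : ℝ :=
  ∏ t, bernPMF (1/2 + δ t) (y t)

/-- KL budget `K(δ) = KL(P_δ ‖ P_0)` where `P_0` is the uniform measure on `{0,1}^B`. -/
noncomputable def klProd (B : ℕ) (δ : Fin B → ℝ) : ℝ :=
  ∑ y : Fin B → Bool,
    prodPMF B δ y * Real.log (prodPMF B δ y / prodPMF B (fun _ => 0) y)

/-- Probability of an event `E ⊆ {0,1}^B` under the product measure `P_δ`. -/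
noncomputable def probEvent (B : ℕ) (δ : Fin B → ℝ) (E : Set (Fin B → Bool)) : ℝ :=
  ∑ y : Fin B → Bool, E.indicator (prodPMF B δ) y

/-- Log-likelihood ratio of `P_δ` against `P_0` at outcome `y ∈ {0,1}^B`:
`L(y) = Σ_t [ y_t·log(2(1/2+δ_t)) + (1−y_t)·log(2(1/2−δ_t)) ]`. -/
noncomputable def llr (B : ℕ) (δ : Fin B → ℝ) (y : Fin B → Bool) : ℝ :=
  ∑ t, (if y t then Real.log (2 * (1/2 + δ t)) else Real.log (2 * (1/2 - δ t)))



lemma sum_prod_bool {B : ℕ} (g : Fin B → Bool → ℝ) :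
    ∑ y : Fin B → Bool, ∏ t, g t (y t) = ∏ t, (g t true + g t false) := by
  have h := Finset.prod_univ_sum (fun _ : Fin B => (Finset.univ : Finset Bool)) g
  rw [Fintype.piFinset_univ] at h
  rw [← h]
  refine Finset.prod_congr rfl fun t _ => ?_
  simp [add_comm]

lemma bern_eq (d : ℝ) (b : Bool) :
    bernPMF (1/2 + d) b = if b then 1/2 + d else 1/2 - d := by
  cases b <;> simp [bernPMF] <;> ring

lemma bern_pos {d : ℝ} (hd : |d| ≤ 1/4) (b : Bool) : 0 < bernPMF (1/2 + d) b := by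
  rw [abs_le] at hd
  rw [bern_eq]; cases b <;> simp <;> linarith [hd.1, hd.2]

lemma prodPMF_pos {B : ℕ} {δ : Fin B → ℝ} (hδ : ∀ t, |δ t| ≤ 1/4) (y : Fin B → Bool) :
    0 < prodPMF B δ y :=
  Finset.prod_pos fun t _ => bern_pos (hδ t) _

lemma prodPMF_nonneg {B : ℕ} {δ : Fin B → ℝ} (hδ : ∀ t, |δ t| ≤ 1/4) (y : Fin B → Bool) :
    0 ≤ prodPMF B δ y := (prodPMF_pos hδ y).le

lemma sum_prodPMF {B : ℕ} (δ : Fin B → ℝ) : ∑ y : Fin B → Bool, prodPMF B δ y = 1 := by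
  unfold prodPMF
  rw [sum_prod_bool]
  apply Finset.prod_eq_one
  intro t _
  rw [bern_eq, bern_eq]; simp; ring

lemma prodPMF_zero {B : ℕ} (y : Fin B → Bool) :
    prodPMF B (fun _ => 0) y = (2:ℝ)⁻¹ ^ B := by
  have h : ∀ t : Fin B, bernPMF (1/2 + (0:ℝ)) (y t) = (2:ℝ)⁻¹ := by
    intro t; cases y t <;> norm_num [bernPMF]
  unfold prodPMF
  rw [Finset.prod_congr rfl fun t _ => h t, Finset.prod_const, Finset.card_univ]
  simp

lemma exp_term {d : ℝ} (hd : |d| ≤ 1/4) (b : Bool) :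
    Real.exp (if b then Real.log (2 * (1/2 + d)) else Real.log (2 * (1/2 - d)))
      = 2 * bernPMF (1/2 + d) b := by
  rw [abs_le] at hd
  cases b <;> rw [bern_eq] <;> simp <;> rw [Real.exp_log (by linarith [hd.1, hd.2])]

lemma exp_llr {B : ℕ} {δ : Fin B → ℝ} (hδ : ∀ t, |δ t| ≤ 1/4) (y : Fin B → Bool) :
    Real.exp (llr B δ y) = 2 ^ B * prodPMF B δ y := by
  rw [llr, Real.exp_sum]
  calc (∏ t, Real.exp (if y t then Real.log (2 * (1/2 + δ t)) else Real.log (2 * (1/2 - δ t))))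
      = ∏ t, 2 * bernPMF (1/2 + δ t) (y t) := by
        exact Finset.prod_congr rfl fun t _ => exp_term (hδ t) (y t)
    _ = (∏ _t : Fin B, (2:ℝ)) * ∏ t, bernPMF (1/2 + δ t) (y t) := Finset.prod_mul_distrib
    _ = 2 ^ B * prodPMF B δ y := by simp [prodPMF]

lemma log_ratio {B : ℕ} {δ : Fin B → ℝ} (hδ : ∀ t, |δ t| ≤ 1/4) (y : Fin B → Bool) :
    Real.log (prodPMF B δ y / prodPMF B (fun _ => 0) y) = llr B δ y := by
  have h : prodPMF B δ y / prodPMF B (fun _ => 0) y = Real.exp (llr B δ y) := by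
    rw [exp_llr hδ y, prodPMF_zero]
    field_simp
    rw [mul_assoc, ← mul_pow]; norm_num
  rw [h, Real.log_exp]

lemma sqrt_eq_exp_half {x : ℝ} (hx : 0 < x) : Real.sqrt x = Real.exp (Real.log x / 2) := by
  rw [Real.sqrt_eq_rpow, Real.rpow_def_of_pos hx]
  ring_nf

lemma aux_sqrt {a : ℝ} (ha : 0 < a) :
    a * Real.exp (-(Real.log (2 * a)) / 2) = Real.sqrt (a / 2) := by
  have h1 : a * Real.exp (-(Real.log (2 * a)) / 2)
      = Real.exp (Real.log a + -(Real.log (2 * a)) / 2) := by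
    rw [Real.exp_add, Real.exp_log ha]
  rw [h1, sqrt_eq_exp_half (by linarith : (0:ℝ) < a / 2)]
  congr 1
  rw [Real.log_div ha.ne' two_ne_zero, Real.log_mul two_ne_zero ha.ne']
  ring

lemma bc_bound {d : ℝ} (hd : |d| ≤ 1/4) :
    Real.sqrt ((1/2 + d) / 2) + Real.sqrt ((1/2 - d) / 2) ≤ Real.exp (-(d^2) / 2) := by
  rw [abs_le] at hd
  have hd2 : d^2 ≤ 1/16 := by nlinarith [hd.1, hd.2]
  have hp : (0:ℝ) ≤ (1/2 + d) / 2 := by linarith [hd.1]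
  have hq : (0:ℝ) ≤ (1/2 - d) / 2 := by linarith [hd.2]
  have hLnn : 0 ≤ Real.sqrt ((1/2 + d) / 2) + Real.sqrt ((1/2 - d) / 2) := by positivity
  have hcross : Real.sqrt ((1/2 + d) / 2) * Real.sqrt ((1/2 - d) / 2)
      ≤ (1/2 - d^2) / 2 := by
    rw [← Real.sqrt_mul hp]
    have h1 : (1/2 + d) / 2 * ((1/2 - d) / 2) ≤ ((1/2 - d^2)/2)^2 := by nlinarith
    calc Real.sqrt ((1/2 + d) / 2 * ((1/2 - d) / 2)) ≤ Real.sqrt (((1/2 - d^2)/2)^2) :=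
          Real.sqrt_le_sqrt h1
      _ = (1/2 - d^2)/2 := Real.sqrt_sq (by nlinarith)
  have hsq : (Real.sqrt ((1/2 + d) / 2) + Real.sqrt ((1/2 - d) / 2))^2 ≤ 1 - d^2 := by
    have e1 : Real.sqrt ((1/2 + d) / 2) ^ 2 = (1/2 + d) / 2 := Real.sq_sqrt hp
    have e2 : Real.sqrt ((1/2 - d) / 2) ^ 2 = (1/2 - d) / 2 := Real.sq_sqrt hq
    nlinarith [hcross, e1, e2]
  have h1d : (0:ℝ) ≤ 1 - d^2 := by nlinarith
  calc Real.sqrt ((1/2 + d) / 2) + Real.sqrt ((1/2 - d) / 2)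
      = Real.sqrt ((Real.sqrt ((1/2 + d) / 2) + Real.sqrt ((1/2 - d) / 2))^2) :=
        (Real.sqrt_sq hLnn).symm
    _ ≤ Real.sqrt (1 - d^2) := Real.sqrt_le_sqrt hsq
    _ ≤ Real.sqrt (Real.exp (-(d^2))) := Real.sqrt_le_sqrt (by linarith [Real.add_one_le_exp (-(d^2))])
    _ = Real.exp (-(d^2) / 2) := by
        rw [sqrt_eq_exp_half (Real.exp_pos _), Real.log_exp]

-- χ² identity / KL upper bound
lemma kl_le_sum_sq {B : ℕ} {δ : Fin B → ℝ} (hδ : ∀ t, |δ t| ≤ 1/4) :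
    klProd B δ ≤ 4 * ∑ t, (δ t)^2 := by
  have hkl : klProd B δ = ∑ y : Fin B → Bool, prodPMF B δ y * llr B δ y := by
    unfold klProd
    exact Finset.sum_congr rfl fun y _ => by rw [log_ratio hδ y]
  have hjensen : Real.exp (∑ y : Fin B → Bool, prodPMF B δ y * llr B δ y)
      ≤ ∑ y : Fin B → Bool, prodPMF B δ y * Real.exp (llr B δ y) := by
    have h := convexOn_exp.map_sum_le (t := (Finset.univ : Finset (Fin B → Bool)))
      (w := prodPMF B δ) (p := llr B δ)
      (fun y _ => prodPMF_nonneg hδ y) (sum_prodPMF δ) (fun y _ => Set.mem_univ _)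
    simpa [smul_eq_mul] using h
  have hchi : ∑ y : Fin B → Bool, prodPMF B δ y * Real.exp (llr B δ y)
      = ∏ t, (1 + 4 * (δ t)^2) := by
    have hpt : ∀ y : Fin B → Bool, prodPMF B δ y * Real.exp (llr B δ y)
        = ∏ t, (2 * bernPMF (1/2 + δ t) (y t)^2) := by
      intro y
      rw [llr, Real.exp_sum, prodPMF, ← Finset.prod_mul_distrib]
      refine Finset.prod_congr rfl fun t _ => ?_
      rw [exp_term (hδ t)]
      ring
    rw [Finset.sum_congr rfl fun y _ => hpt y,
      sum_prod_bool (fun t b => 2 * bernPMF (1/2 + δ t) b ^ 2)]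
    refine Finset.prod_congr rfl fun t _ => ?_
    rw [bern_eq, bern_eq]; simp; ring
  have hprod : ∏ t, (1 + 4 * (δ t)^2) ≤ Real.exp (4 * ∑ t, (δ t)^2) := by
    rw [Finset.mul_sum, Real.exp_sum]
    refine Finset.prod_le_prod (fun t _ => by positivity) (fun t _ => ?_)
    have := Real.add_one_le_exp (4 * (δ t)^2)
    linarith
  have : Real.exp (klProd B δ) ≤ Real.exp (4 * ∑ t, (δ t)^2) := by
    rw [hkl]
    exact le_trans hjensen (le_trans (le_of_eq hchi) hprod)
  exact (Real.exp_le_exp).mp this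

-- Type I error
lemma typeI {B : ℕ} {δ : Fin B → ℝ} (hδ : ∀ t, |δ t| ≤ 1/4) (K : ℝ) :
    probEvent B (fun _ => 0) {y | K/2 ≤ llr B δ y} ≤ Real.exp (-(K/2)) := by
  unfold probEvent
  have hpt : ∀ y : Fin B → Bool,
      ({y | K/2 ≤ llr B δ y} : Set (Fin B → Bool)).indicator (prodPMF B (fun _ => 0)) y
        ≤ Real.exp (-(K/2)) * prodPMF B δ y := by
    intro y
    rw [Set.indicator_apply]
    split_ifs with h
    · have h1 : prodPMF B (fun _ => 0) y ≤ Real.exp (-(K/2)) * Real.exp (llr B δ y)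
          * prodPMF B (fun _ => 0) y := by
        have h2 : (1:ℝ) ≤ Real.exp (-(K/2)) * Real.exp (llr B δ y) := by
          rw [← Real.exp_add]
          have : (0:ℝ) ≤ -(K/2) + llr B δ y := by
            simp only [Set.mem_setOf_eq] at h; linarith
          calc (1:ℝ) = Real.exp 0 := Real.exp_zero.symm
            _ ≤ _ := Real.exp_le_exp.mpr this
        nlinarith [prodPMF_nonneg (fun t => by simp : ∀ t : Fin B, |(0:ℝ)| ≤ 1/4) y, h2]
      calc prodPMF B (fun _ => 0) y
          ≤ Real.exp (-(K/2)) * Real.exp (llr B δ y) * prodPMF B (fun _ => 0) y := h1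
        _ = Real.exp (-(K/2)) * prodPMF B δ y := by
            rw [exp_llr hδ y, prodPMF_zero]
            field_simp
            have h2p : ((1:ℝ)/2)^B * 2^B = 1 := by rw [← mul_pow]; norm_num
            linear_combination (prodPMF B δ y) * h2p
    · exact mul_nonneg (Real.exp_pos _).le (prodPMF_nonneg hδ y)
  calc (∑ y : Fin B → Bool,
        ({y | K/2 ≤ llr B δ y} : Set (Fin B → Bool)).indicator (prodPMF B (fun _ => 0)) y)
      ≤ ∑ y : Fin B → Bool, Real.exp (-(K/2)) * prodPMF B δ y :=
        Finset.sum_le_sum fun y _ => hpt y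
    _ = Real.exp (-(K/2)) := by rw [← Finset.mul_sum, sum_prodPMF]; ring

-- Bhattacharyya sum
lemma sum_bc {B : ℕ} {δ : Fin B → ℝ} (hδ : ∀ t, |δ t| ≤ 1/4) :
    ∑ y : Fin B → Bool, prodPMF B δ y * Real.exp (-(llr B δ y) / 2)
      ≤ Real.exp (-(∑ t, (δ t)^2) / 2) := by
  have hpt : ∀ y : Fin B → Bool, prodPMF B δ y * Real.exp (-(llr B δ y) / 2)
      = ∏ t, Real.sqrt (bernPMF (1/2 + δ t) (y t) / 2) := by
    intro y
    have hsum : -(llr B δ y) / 2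
        = ∑ t, (-(if y t then Real.log (2 * (1/2 + δ t)) else Real.log (2 * (1/2 - δ t))) / 2) := by
      rw [llr, ← Finset.sum_neg_distrib, Finset.sum_div]
    rw [hsum, Real.exp_sum, prodPMF, ← Finset.prod_mul_distrib]
    refine Finset.prod_congr rfl fun t _ => ?_
    have hb := bern_pos (hδ t) (y t)
    have hterm : (if y t then Real.log (2 * (1/2 + δ t)) else Real.log (2 * (1/2 - δ t)))
        = Real.log (2 * bernPMF (1/2 + δ t) (y t)) := by
      rw [bern_eq]; cases y t <;> simp
    rw [hterm]
    exact aux_sqrt hb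
  rw [Finset.sum_congr rfl fun y _ => hpt y,
    sum_prod_bool (fun t b => Real.sqrt (bernPMF (1/2 + δ t) b / 2))]
  have key : ∀ t : Fin B, Real.sqrt (bernPMF (1/2 + δ t) true / 2)
      + Real.sqrt (bernPMF (1/2 + δ t) false / 2) ≤ Real.exp (-((δ t)^2) / 2) := by
    intro t
    have e1 : bernPMF (1/2 + δ t) true = 1/2 + δ t := by rw [bern_eq]; norm_num
    have e2 : bernPMF (1/2 + δ t) false = 1/2 - δ t := by rw [bern_eq]; norm_num
    rw [e1, e2]
    exact bc_bound (hδ t)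
  calc (∏ t, (Real.sqrt (bernPMF (1/2 + δ t) true / 2)
        + Real.sqrt (bernPMF (1/2 + δ t) false / 2)))
      ≤ ∏ t, Real.exp (-((δ t)^2) / 2) :=
        Finset.prod_le_prod (fun t _ => by positivity) (fun t _ => key t)
    _ = Real.exp (-(∑ t, (δ t)^2) / 2) := by
        rw [← Real.exp_sum]
        congr 1
        rw [← Finset.sum_neg_distrib, Finset.sum_div]

-- Type II error
lemma typeII {B : ℕ} {δ : Fin B → ℝ} (hδ : ∀ t, |δ t| ≤ 1/4) (K : ℝ) :
    probEvent B δ {y | llr B δ y < K/2}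
      ≤ Real.exp (K/4) * Real.exp (-(∑ t, (δ t)^2) / 2) := by
  unfold probEvent
  have hpt : ∀ y : Fin B → Bool,
      ({y | llr B δ y < K/2} : Set (Fin B → Bool)).indicator (prodPMF B δ) y
        ≤ Real.exp (K/4) * (prodPMF B δ y * Real.exp (-(llr B δ y) / 2)) := by
    intro y
    rw [Set.indicator_apply]
    split_ifs with h
    · simp only [Set.mem_setOf_eq] at h
      have h2 : (1:ℝ) ≤ Real.exp (K/4) * Real.exp (-(llr B δ y) / 2) := by
        rw [← Real.exp_add]
        calc (1:ℝ) = Real.exp 0 := Real.exp_zero.symm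
          _ ≤ _ := Real.exp_le_exp.mpr (by linarith)
      nlinarith [prodPMF_nonneg hδ y]
    · exact mul_nonneg (Real.exp_pos _).le
        (mul_nonneg (prodPMF_nonneg hδ y) (Real.exp_pos _).le)
  calc (∑ y : Fin B → Bool,
        ({y | llr B δ y < K/2} : Set (Fin B → Bool)).indicator (prodPMF B δ) y)
      ≤ ∑ y : Fin B → Bool, Real.exp (K/4) * (prodPMF B δ y * Real.exp (-(llr B δ y) / 2)) :=
        Finset.sum_le_sum fun y _ => hpt y
    _ = Real.exp (K/4) * ∑ y : Fin B → Bool, prodPMF B δ y * Real.exp (-(llr B δ y) / 2) :=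
        by rw [Finset.mul_sum]
    _ ≤ Real.exp (K/4) * Real.exp (-(∑ t, (δ t)^2) / 2) :=
        mul_le_mul_of_nonneg_left (sum_bc hδ) (Real.exp_pos _).le


/-- **Matching upper bound via the likelihood-ratio test.** There exist universal constants
`c, C, K₀ > 0` (independent of `B` and `δ`) such that for every `K ≥ K₀`, every `B ≥ 1`, and
every `δ` with `|δ_t| ≤ 1/4` and `KL(P_δ ‖ P_0) ≥ C·K`, the likelihood-ratio test
`φ_K(y) = 1{L(y) ≥ K/2}` satisfies `P_0(φ_K = 1) + P_δ(φ_K = 0) ≤ e^{−cK}`. -/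
theorem lr_test_upper_bound :
    ∃ c > (0 : ℝ), ∃ C > (0 : ℝ), ∃ K₀ > (0 : ℝ), ∀ K : ℝ, K₀ ≤ K →
      ∀ (B : ℕ), 1 ≤ B → ∀ δ : Fin B → ℝ, (∀ t, |δ t| ≤ 1/4) →
      C * K ≤ klProd B δ →
      probEvent B (fun _ => 0) {y | K/2 ≤ llr B δ y} +
        probEvent B δ {y | llr B δ y < K/2} ≤ Real.exp (-(c * K)) := by
  refine ⟨1/4, by norm_num, 6, by norm_num, 4, by norm_num, fun K hK B _hB δ hδ hkl => ?_⟩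
  have hS : 6 * K ≤ 4 * ∑ t, (δ t)^2 := le_trans hkl (kl_le_sum_sq hδ)
  have h1 := typeI hδ K
  have h2 := typeII hδ K
  have h3 : Real.exp (K/4) * Real.exp (-(∑ t, (δ t)^2) / 2) ≤ Real.exp (-(K/2)) := by
    rw [← Real.exp_add]
    apply Real.exp_le_exp.mpr
    linarith
  have hfin : Real.exp (-(K/2)) + Real.exp (-(K/2)) ≤ Real.exp (-(1/4 * K)) := by
    have : Real.exp (-(K/2)) + Real.exp (-(K/2)) = 2 * Real.exp (-(K/2)) := by ring
    rw [this]
    have h2e : (2:ℝ) ≤ Real.exp (K/4) := by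
      calc (2:ℝ) ≤ Real.exp 1 := by
            have := Real.add_one_le_exp 1; linarith
        _ ≤ Real.exp (K/4) := Real.exp_le_exp.mpr (by linarith)
    calc 2 * Real.exp (-(K/2)) ≤ Real.exp (K/4) * Real.exp (-(K/2)) := by
          nlinarith [Real.exp_pos (-(K/2))]
      _ = Real.exp (-(1/4 * K)) := by rw [← Real.exp_add]; ring_nf
  linarith [h1, le_trans h2 h3]
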